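/- If two graphs on the same n vertices differ by at most C edges, then their symmetric normalized Laplacians satisfy ‖L̂₁ - L̂₂‖_{S¹} ≤ 2C√2·√(n-1). -/

import Mathlib

open Matrix Finset

/-- The symmetric normalized Laplacian `I - D^{-1/2} A D^{-1/2}`. -/
noncomputable def normLap {n : ℕ} (G : SimpleGraph (Fin n)) [DecidableRel G.Adj] :
    Matrix (Fin n) (Fin n) ℝ :=
  1 - Matrix.of fun i j =>
    (G.adjMatrix ℝ) i j / (Real.sqrt (G.degree i) * Real.sqrt (G.degree j))

noncomputable def xm {n : ℕ} (G : SimpleGraph (Fin n)) [DecidableRel G.Adj]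
    (i j : Fin n) : ℝ :=
  (G.adjMatrix ℝ) i j / (Real.sqrt (G.degree i) * Real.sqrt (G.degree j))

variable {n : ℕ}

lemma normLap_sub_apply (G₁ G₂ : SimpleGraph (Fin n)) [DecidableRel G₁.Adj]
    [DecidableRel G₂.Adj] (i j : Fin n) :
    (normLap G₁ - normLap G₂) i j = xm G₂ i j - xm G₁ i j := by
  simp only [normLap, xm, Matrix.sub_apply, Matrix.of_apply]
  ring

lemma xm_nonneg (G : SimpleGraph (Fin n)) [DecidableRel G.Adj] (i j : Fin n) :
    0 ≤ xm G i j := by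
  unfold xm
  apply div_nonneg
  · simp only [SimpleGraph.adjMatrix_apply]
    split_ifs <;> norm_num
  · positivity

lemma xm_symm (G : SimpleGraph (Fin n)) [DecidableRel G.Adj] (i j : Fin n) :
    xm G i j = xm G j i := by
  unfold xm
  rw [SimpleGraph.adjMatrix_apply, SimpleGraph.adjMatrix_apply, mul_comm]
  congr 1
  simp [SimpleGraph.adj_comm]

lemma xm_self (G : SimpleGraph (Fin n)) [DecidableRel G.Adj] (i : Fin n) :
    xm G i i = 0 := by
  unfold xm
  simp

lemma xm_sq (G : SimpleGraph (Fin n)) [DecidableRel G.Adj] (i j : Fin n) :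
    (xm G i j) ^ 2 = (if G.Adj i j then ((G.degree i : ℝ) * (G.degree j))⁻¹ else 0) := by
  unfold xm
  rw [div_pow, mul_pow, Real.sq_sqrt (by positivity), Real.sq_sqrt (by positivity)]
  simp only [SimpleGraph.adjMatrix_apply]
  split_ifs <;> simp [one_div]

lemma xm_row_sq_le_one (G : SimpleGraph (Fin n)) [DecidableRel G.Adj]
    (hdeg : ∀ v, 0 < G.degree v) (i : Fin n) : ∑ j, (xm G i j) ^ 2 ≤ 1 := by
  have h1 : ∀ j, (xm G i j) ^ 2 ≤ (if G.Adj i j then ((G.degree i : ℝ))⁻¹ else 0) := by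
    intro j
    rw [xm_sq]
    split_ifs with h
    · apply inv_anti₀
      · exact_mod_cast hdeg i
      · nlinarith [hdeg i, hdeg j, (Nat.one_le_cast (α := ℝ)).mpr (hdeg j),
          (Nat.cast_pos (α := ℝ)).mpr (hdeg i)]
    · exact le_refl 0
  have h2 : ∑ j, (if G.Adj i j then ((G.degree i : ℝ))⁻¹ else 0) = 1 := by
    rw [← Finset.sum_filter]
    rw [← SimpleGraph.neighborFinset_eq_filter, Finset.sum_const,
      ← SimpleGraph.degree, nsmul_eq_mul]
    exact mul_inv_cancel₀ (by exact_mod_cast (hdeg i).ne')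
  calc ∑ j, (xm G i j) ^ 2 ≤ ∑ j, (if G.Adj i j then ((G.degree i : ℝ))⁻¹ else 0) :=
        Finset.sum_le_sum fun j _ => h1 j
    _ = 1 := h2

lemma row_sq_le_two (G₁ G₂ : SimpleGraph (Fin n)) [DecidableRel G₁.Adj]
    [DecidableRel G₂.Adj] (hdeg₁ : ∀ v, 0 < G₁.degree v) (hdeg₂ : ∀ v, 0 < G₂.degree v)
    (i : Fin n) : ∑ j, (xm G₂ i j - xm G₁ i j) ^ 2 ≤ 2 := by
  have h : ∀ j, (xm G₂ i j - xm G₁ i j) ^ 2 ≤ (xm G₁ i j) ^ 2 + (xm G₂ i j) ^ 2 :=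
    fun j => by nlinarith [mul_nonneg (xm_nonneg G₁ i j) (xm_nonneg G₂ i j)]
  calc ∑ j, (xm G₂ i j - xm G₁ i j) ^ 2
      ≤ ∑ j, ((xm G₁ i j) ^ 2 + (xm G₂ i j) ^ 2) := Finset.sum_le_sum fun j _ => h j
    _ = ∑ j, (xm G₁ i j) ^ 2 + ∑ j, (xm G₂ i j) ^ 2 := Finset.sum_add_distrib
    _ ≤ 1 + 1 := add_le_add (xm_row_sq_le_one G₁ hdeg₁ i) (xm_row_sq_le_one G₂ hdeg₂ i)
    _ = 2 := by norm_num

lemma double_sum_sq_le {α : Type*} [Fintype α] [DecidableEq α] (f : α → α → ℝ)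
    (T : Finset α) (hsym : ∀ i j, (f i j) ^ 2 = (f j i) ^ 2)
    (hsupp : ∀ i ∉ T, ∀ j ∉ T, f i j = 0) :
    ∑ i, ∑ j, f i j ^ 2 ≤ 2 * ∑ v ∈ T, ∑ j, f v j ^ 2 := by
  have hsplit : ∑ i, ∑ j, f i j ^ 2
      = ∑ i ∈ univ \ T, ∑ j, f i j ^ 2 + ∑ i ∈ T, ∑ j, f i j ^ 2 :=
    (Finset.sum_sdiff (Finset.subset_univ T)).symm
  have h2 : ∑ i ∈ univ \ T, ∑ j, f i j ^ 2 ≤ ∑ v ∈ T, ∑ j, f v j ^ 2 := by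
    have hrow : ∀ i ∈ univ \ T, ∑ j, f i j ^ 2 = ∑ j ∈ T, f i j ^ 2 := by
      intro i hi
      rw [Finset.mem_sdiff] at hi
      exact (Finset.sum_subset (Finset.subset_univ T) fun j _ hj => by
        rw [hsupp i hi.2 j hj]; ring).symm
    calc ∑ i ∈ univ \ T, ∑ j, f i j ^ 2 = ∑ i ∈ univ \ T, ∑ j ∈ T, f i j ^ 2 :=
          Finset.sum_congr rfl hrow
      _ ≤ ∑ i ∈ univ, ∑ j ∈ T, f i j ^ 2 := Finset.sum_le_sum_of_subset_of_nonneg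
          (Finset.sdiff_subset) (fun i _ _ => Finset.sum_nonneg fun j _ => sq_nonneg _)
      _ = ∑ j ∈ T, ∑ i ∈ univ, f i j ^ 2 := Finset.sum_comm
      _ = ∑ j ∈ T, ∑ i ∈ univ, f j i ^ 2 := by
          exact Finset.sum_congr rfl fun j _ => Finset.sum_congr rfl fun i _ => hsym i j
  linarith [hsplit, h2]

lemma matrix_rank_add_le {m : Type*} [Fintype m] (A B : Matrix m m ℝ) :
    (A + B).rank ≤ A.rank + B.rank := by
  unfold Matrix.rank
  rw [Matrix.mulVecLin_add]
  refine le_trans (Submodule.finrank_mono ?_) (Submodule.finrank_add_le_finrank_add_finrank _ _)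
  rintro y ⟨x, rfl⟩
  exact Submodule.mem_sup.2 ⟨A.mulVecLin x, LinearMap.mem_range_self _ _,
    B.mulVecLin x, LinearMap.mem_range_self _ _, rfl⟩

lemma rank_le_of_rows_subset {m : Type*} [Fintype m] [DecidableEq m] (S : Finset m)
    (A : Matrix m m ℝ) (h : ∀ i ∉ S, ∀ j, A i j = 0) : A.rank ≤ S.card := by
  have hA : A = (Matrix.of fun i (s : ↥S) => if i = (s : m) then (1:ℝ) else 0) *
      (Matrix.of fun (s : ↥S) j => A (s : m) j) := by
    ext i j
    rw [Matrix.mul_apply]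
    by_cases hi : i ∈ S
    · rw [Fintype.sum_eq_single (⟨i, hi⟩ : ↥S) (by
        rintro ⟨b, hb⟩ hne
        simp only [Matrix.of_apply, ite_mul, one_mul, zero_mul, ite_eq_right_iff]
        intro hib; exact absurd (by simp [hib]) hne)]
      simp
    · rw [h i hi j]
      symm
      apply Finset.sum_eq_zero
      rintro ⟨b, hb⟩ -
      simp only [Matrix.of_apply, ite_mul, one_mul, zero_mul, ite_eq_right_iff]
      intro hib; subst hib; exact absurd hb hi
  calc A.rank = ((Matrix.of fun i (s : ↥S) => if i = (s : m) then (1:ℝ) else 0) *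
      (Matrix.of fun (s : ↥S) j => A (s : m) j)).rank := by rw [← hA]
    _ ≤ (Matrix.of fun (s : ↥S) j => A (s : m) j).rank := Matrix.rank_mul_le_right _ _
    _ ≤ Fintype.card ↥S := Matrix.rank_le_card_height _
    _ = S.card := Fintype.card_coe S

lemma rank_le_two_card {m : Type*} [Fintype m] [DecidableEq m] (T : Finset m)
    (A : Matrix m m ℝ) (hsupp : ∀ i ∉ T, ∀ j ∉ T, A i j = 0) : A.rank ≤ 2 * T.card := by
  set P : Matrix m m ℝ := Matrix.of fun i j => if i ∈ T then A i j else 0 with hP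
  set Q : Matrix m m ℝ := Matrix.of fun i j => if i ∈ T then 0 else A i j with hQ
  have hPQ : A = P + Q := by
    ext i j
    by_cases hi : i ∈ T <;> simp [hP, hQ, hi]
  have h1 : P.rank ≤ T.card := rank_le_of_rows_subset T P (fun i hi j => by simp [hP, hi])
  have h2 : Q.rank ≤ T.card := by
    rw [← Matrix.rank_transpose]
    refine rank_le_of_rows_subset T Qᵀ (fun j hj i => ?_)
    by_cases hi : i ∈ T
    · simp [hQ, Matrix.transpose_apply, hi]
    · simp [hQ, Matrix.transpose_apply, hi, hsupp i hi j hj]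
  calc A.rank = (P + Q).rank := by rw [← hPQ]
    _ ≤ P.rank + Q.rank := matrix_rank_add_le P Q
    _ ≤ T.card + T.card := add_le_add h1 h2
    _ = 2 * T.card := by ring

lemma sum_sq_eig {N : ℕ} (A : Matrix (Fin N) (Fin N) ℝ) (hA : A.IsHermitian) :
    ∑ i, hA.eigenvalues i ^ 2 = ∑ i, ∑ j, A i j * A j i := by
  have h := hA.spectral_theorem
  set U : Matrix (Fin N) (Fin N) ℝ := (hA.eigenvectorUnitary : Matrix (Fin N) (Fin N) ℝ) with hUdef
  set D : Matrix (Fin N) (Fin N) ℝ := diagonal (RCLike.ofReal ∘ hA.eigenvalues) with hDdef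
  have hU : star U * U = 1 := (Matrix.mem_unitaryGroup_iff').mp hA.eigenvectorUnitary.2
  have hAA : A * A = U * (D * D) * star U := by
    calc A * A = U * D * star U * (U * D * star U) := by rw [h, Unitary.conjStarAlgAut_apply]
      _ = U * (D * ((star U * U) * (D * star U))) := by simp only [Matrix.mul_assoc]
      _ = U * (D * D) * star U := by rw [hU]; simp only [Matrix.one_mul, Matrix.mul_assoc]
  have htr : trace (A * A) = ∑ i, hA.eigenvalues i ^ 2 := by
    rw [hAA, Matrix.trace_mul_cycle, ← Matrix.mul_assoc, hU, Matrix.one_mul,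
      Matrix.diagonal_mul_diagonal, Matrix.trace_diagonal]
    simp [sq]
  rw [← htr]
  simp [Matrix.trace, Matrix.mul_apply, Matrix.diag]

section Graphs
variable (G₁ G₂ : SimpleGraph (Fin n)) [DecidableRel G₁.Adj] [DecidableRel G₂.Adj]

lemma deg_eq_of_adj_iff (v : Fin n) (h : ∀ j, G₁.Adj v j ↔ G₂.Adj v j) :
    G₁.degree v = G₂.degree v := by
  unfold SimpleGraph.degree
  congr 1
  ext j
  simp only [SimpleGraph.mem_neighborFinset]
  exact h j

lemma entry_zero (i j : Fin n) (hadj : G₁.Adj i j ↔ G₂.Adj i j)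
    (hi : G₁.degree i = G₂.degree i) (hj : G₁.degree j = G₂.degree j) :
    xm G₂ i j - xm G₁ i j = 0 := by
  rw [sub_eq_zero]
  unfold xm
  rw [← hi, ← hj]
  simp only [SimpleGraph.adjMatrix_apply]
  rw [if_congr hadj.symm rfl rfl]

noncomputable def touched : Finset (Fin n) :=
  univ.filter (fun v => ∃ e ∈ symmDiff G₁.edgeFinset G₂.edgeFinset, v ∈ e)

lemma card_touched_le :
    (touched G₁ G₂).card ≤ 2 * (symmDiff G₁.edgeFinset G₂.edgeFinset).card := by
  classical
  have hsub : touched G₁ G₂ ⊆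
      (symmDiff G₁.edgeFinset G₂.edgeFinset).biUnion (fun e => univ.filter (· ∈ e)) := by
    intro v hv
    rw [touched, Finset.mem_filter] at hv
    obtain ⟨-, e, he, hve⟩ := hv
    exact Finset.mem_biUnion.2 ⟨e, he, Finset.mem_filter.2 ⟨Finset.mem_univ _, hve⟩⟩
  have hcard : ∀ e : Sym2 (Fin n), (univ.filter (· ∈ e)).card ≤ 2 := by
    intro e
    induction e using Sym2.ind with
    | _ x y =>
      have hsub2 : univ.filter (· ∈ s(x,y)) ⊆ {x, y} := by
        intro z hz
        rw [Finset.mem_filter, Sym2.mem_iff] at hz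
        simp only [Finset.mem_insert, Finset.mem_singleton]
        tauto
      exact le_trans (Finset.card_le_card hsub2)
        (le_trans (Finset.card_insert_le _ _) (by simp))
  calc (touched G₁ G₂).card
      ≤ ((symmDiff G₁.edgeFinset G₂.edgeFinset).biUnion (fun e => univ.filter (· ∈ e))).card :=
        Finset.card_le_card hsub
    _ ≤ ∑ e ∈ symmDiff G₁.edgeFinset G₂.edgeFinset, (univ.filter (· ∈ e)).card :=
        Finset.card_biUnion_le
    _ ≤ ∑ _e ∈ symmDiff G₁.edgeFinset G₂.edgeFinset, 2 :=
        Finset.sum_le_sum fun e _ => hcard e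
    _ = 2 * (symmDiff G₁.edgeFinset G₂.edgeFinset).card := by
        rw [Finset.sum_const, smul_eq_mul, mul_comm]

lemma not_touched_adj (v : Fin n) (hv : v ∉ touched G₁ G₂) (j : Fin n) :
    G₁.Adj v j ↔ G₂.Adj v j := by
  by_contra hne
  apply hv
  have hmem : s(v, j) ∈ symmDiff G₁.edgeFinset G₂.edgeFinset := by
    rw [Finset.mem_symmDiff]
    simp only [SimpleGraph.mem_edgeFinset, SimpleGraph.mem_edgeSet]
    tauto
  exact Finset.mem_filter.2 ⟨Finset.mem_univ _, ⟨s(v, j), hmem, Sym2.mem_mk_left v j⟩⟩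

lemma not_touched_deg (v : Fin n) (hv : v ∉ touched G₁ G₂) :
    G₁.degree v = G₂.degree v :=
  deg_eq_of_adj_iff G₁ G₂ v (not_touched_adj G₁ G₂ v hv)

lemma not_touched_entry (i j : Fin n) (hi : i ∉ touched G₁ G₂) (hj : j ∉ touched G₁ G₂) :
    xm G₂ i j - xm G₁ i j = 0 :=
  entry_zero G₁ G₂ i j (not_touched_adj G₁ G₂ i hi j) (not_touched_deg G₁ G₂ i hi)
    (not_touched_deg G₁ G₂ j hj)

end Graphs

section SingleEdge
variable (G₁ G₂ : SimpleGraph (Fin n)) [DecidableRel G₁.Adj] [DecidableRel G₂.Adj]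
variable {u w : Fin n}

lemma se_adj_iff (huw : u ≠ w)
    (hOnly : ∀ a b : Fin n, s(a,b) ≠ s(u,w) → (G₁.Adj a b ↔ G₂.Adj a b))
    {j : Fin n} (hj : j ≠ w) : (G₁.Adj u j ↔ G₂.Adj u j) := by
  apply hOnly
  intro h
  rw [Sym2.eq_iff] at h
  rcases h with ⟨-, h⟩ | ⟨h, -⟩
  · exact hj h
  · exact huw h

lemma se_deg_u (huw : u ≠ w) (hA : G₁.Adj u w) (hN : ¬ G₂.Adj u w)
    (hOnly : ∀ a b : Fin n, s(a,b) ≠ s(u,w) → (G₁.Adj a b ↔ G₂.Adj a b)) :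
    G₁.degree u = G₂.degree u + 1 := by
  have hN2 : G₂.neighborFinset u = (G₁.neighborFinset u).erase w := by
    ext j
    simp only [SimpleGraph.mem_neighborFinset, Finset.mem_erase]
    constructor
    · intro h
      have hjw : j ≠ w := by rintro rfl; exact hN h
      exact ⟨hjw, (se_adj_iff G₁ G₂ huw hOnly hjw).mpr h⟩
    · rintro ⟨hjw, h⟩
      exact (se_adj_iff G₁ G₂ huw hOnly hjw).mp h
  have hwmem : w ∈ G₁.neighborFinset u := (SimpleGraph.mem_neighborFinset _ _ _).2 hA
  have h1 : 0 < G₁.degree u := by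
    rw [SimpleGraph.degree]
    exact Finset.card_pos.2 ⟨w, hwmem⟩
  have h2 : G₂.degree u = G₁.degree u - 1 := by
    rw [SimpleGraph.degree, SimpleGraph.degree, hN2, Finset.card_erase_of_mem hwmem]
  omega

lemma se_row (hdeg₂ : ∀ v, 0 < G₂.degree v)
    (huw : u ≠ w) (hA : G₁.Adj u w) (hN : ¬ G₂.Adj u w)
    (hOnly : ∀ a b : Fin n, s(a,b) ≠ s(u,w) → (G₁.Adj a b ↔ G₂.Adj a b)) :
    ∑ j, (xm G₂ u j - xm G₁ u j) ^ 2 ≤ 3/4 := by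
  classical
  have hu : G₁.degree u = G₂.degree u + 1 :=
    se_deg_u G₁ G₂ huw hA hN hOnly
  have hw : G₁.degree w = G₂.degree w + 1 := by
    refine se_deg_u G₁ G₂ huw.symm hA.symm (fun h => hN h.symm) ?_
    intro a b hab
    exact hOnly a b (fun h => hab (h.trans Sym2.eq_swap))
  set a : ℝ := (G₂.degree u : ℝ) with ha
  have ha1 : 1 ≤ a := by
    have : 1 ≤ G₂.degree u := hdeg₂ u
    rw [ha]
    exact_mod_cast this
  have hd1u : (G₁.degree u : ℝ) = a + 1 := by rw [hu]; push_cast; ring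
  set K : ℝ := ((Real.sqrt a)⁻¹ - (Real.sqrt (a+1))⁻¹) ^ 2 with hK
  have hKnonneg : 0 ≤ K := sq_nonneg _
  -- the (u,w) term
  have hterm_w : (xm G₂ u w - xm G₁ u w) ^ 2 ≤ 1/4 := by
    have h2 : xm G₂ u w = 0 := by unfold xm; simp [hN]
    rw [h2, zero_sub, neg_sq, xm_sq, if_pos hA]
    have hd2 : (2:ℝ) ≤ (G₁.degree u : ℝ) := by rw [hd1u]; linarith
    have hd2w : (2:ℝ) ≤ (G₁.degree w : ℝ) := by
      have h1 := hdeg₂ w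
      have : (2:ℕ) ≤ G₁.degree w := by omega
      exact_mod_cast this
    have h4 : (4:ℝ) ≤ (G₁.degree u : ℝ) * (G₁.degree w : ℝ) := by nlinarith
    calc ((G₁.degree u : ℝ) * (G₁.degree w : ℝ))⁻¹ ≤ ((4:ℝ))⁻¹ :=
          inv_anti₀ (by norm_num) h4
      _ = 1/4 := by norm_num
  -- tail terms
  have htail : ∀ j ∈ (univ \ ({u, w} : Finset (Fin n))),
      (xm G₂ u j - xm G₁ u j) ^ 2 ≤ (if G₂.Adj u j then K else 0) := by
    intro j hj
    rw [Finset.mem_sdiff, Finset.mem_insert, Finset.mem_singleton] at hj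
    push_neg at hj
    obtain ⟨-, hju, hjw⟩ := hj
    have hadj : G₁.Adj u j ↔ G₂.Adj u j := se_adj_iff G₁ G₂ huw hOnly hjw
    have hdegj : G₁.degree j = G₂.degree j := by
      apply deg_eq_of_adj_iff
      intro b
      apply hOnly
      intro h
      rw [Sym2.eq_iff] at h
      rcases h with ⟨h, -⟩ | ⟨h, -⟩
      · exact hju h
      · exact hjw h
    by_cases hadj2 : G₂.Adj u j
    · rw [if_pos hadj2]
      have hxm2 : xm G₂ u j = (Real.sqrt (G₂.degree j))⁻¹ * (Real.sqrt a)⁻¹ := by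
        unfold xm
        rw [SimpleGraph.adjMatrix_apply, if_pos hadj2, ← ha, one_div, mul_inv, mul_comm]
      have hxm1 : xm G₁ u j = (Real.sqrt (G₂.degree j))⁻¹ * (Real.sqrt (a+1))⁻¹ := by
        unfold xm
        rw [SimpleGraph.adjMatrix_apply, if_pos (hadj.mpr hadj2), hd1u, hdegj, one_div,
          mul_inv, mul_comm]
      rw [hxm2, hxm1, ← mul_sub, mul_pow, ← hK]
      have hj1 : (1:ℝ) ≤ (G₂.degree j : ℝ) := by
        have : 1 ≤ G₂.degree j := hdeg₂ j
        exact_mod_cast this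
      have hs1 : (1:ℝ) ≤ Real.sqrt (G₂.degree j) := by
        rw [show (1:ℝ) = Real.sqrt 1 by simp]
        exact Real.sqrt_le_sqrt hj1
      have hinv : ((Real.sqrt (G₂.degree j))⁻¹) ^ 2 ≤ 1 := by
        rw [inv_pow]
        apply inv_le_one_of_one_le₀
        nlinarith
      calc ((Real.sqrt (G₂.degree j))⁻¹) ^ 2 * K ≤ 1 * K :=
            mul_le_mul_of_nonneg_right hinv hKnonneg
        _ = K := one_mul K
    · rw [if_neg hadj2]
      have hn1 : ¬ G₁.Adj u j := fun h => hadj2 (hadj.mp h)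
      have h1 : xm G₁ u j = 0 := by unfold xm; simp [hn1]
      have h2 : xm G₂ u j = 0 := by unfold xm; simp [hadj2]
      rw [h1, h2]
      norm_num
  have hsum_tail : ∑ j ∈ (univ \ ({u, w} : Finset (Fin n))), (xm G₂ u j - xm G₁ u j) ^ 2
      ≤ a * K := by
    calc ∑ j ∈ (univ \ ({u, w} : Finset (Fin n))), (xm G₂ u j - xm G₁ u j) ^ 2
        ≤ ∑ j ∈ (univ \ ({u, w} : Finset (Fin n))), (if G₂.Adj u j then K else 0) :=
          Finset.sum_le_sum htail
      _ ≤ ∑ j, (if G₂.Adj u j then K else 0) := Finset.sum_le_sum_of_subset_of_nonneg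
          Finset.sdiff_subset (fun j _ _ => by split_ifs <;> simp [hKnonneg])
      _ = a * K := by
          rw [← Finset.sum_filter, ← SimpleGraph.neighborFinset_eq_filter, Finset.sum_const,
            ← SimpleGraph.degree, nsmul_eq_mul, ha]
  have haK : a * K ≤ 1/2 := by
    have hsa : (0:ℝ) < Real.sqrt a := Real.sqrt_pos.2 (by linarith)
    have hx2 : ((Real.sqrt a)⁻¹) ^ 2 = a⁻¹ := by
      rw [inv_pow, Real.sq_sqrt (by linarith : (0:ℝ) ≤ a)]
    have hy2 : ((Real.sqrt (a+1))⁻¹) ^ 2 = (a+1)⁻¹ := by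
      rw [inv_pow, Real.sq_sqrt (by linarith : (0:ℝ) ≤ a+1)]
    have hyx : (Real.sqrt (a+1))⁻¹ ≤ (Real.sqrt a)⁻¹ :=
      inv_anti₀ hsa (Real.sqrt_le_sqrt (by linarith))
    have hy0 : (0:ℝ) ≤ (Real.sqrt (a+1))⁻¹ := by positivity
    have hKle : K ≤ a⁻¹ - (a+1)⁻¹ := by
      rw [hK]
      nlinarith [hx2, hy2, hyx, hy0]
    have hstep : a * K ≤ a * (a⁻¹ - (a+1)⁻¹) :=
      mul_le_mul_of_nonneg_left hKle (by linarith)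
    have hainv : a * (a⁻¹ - (a+1)⁻¹) = 1 - a/(a+1) := by
      field_simp
    have hfin : a * (a⁻¹ - (a+1)⁻¹) ≤ 1/2 := by
      rw [hainv]
      have : 1/2 ≤ a/(a+1) := by
        rw [div_le_div_iff₀ (by norm_num) (by linarith)]
        linarith
      linarith
    linarith
  -- combine
  have hsplit : ∑ j, (xm G₂ u j - xm G₁ u j) ^ 2
      = ∑ j ∈ (univ \ ({u, w} : Finset (Fin n))), (xm G₂ u j - xm G₁ u j) ^ 2
        + ∑ j ∈ ({u, w} : Finset (Fin n)), (xm G₂ u j - xm G₁ u j) ^ 2 :=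
    (Finset.sum_sdiff (Finset.subset_univ _)).symm
  have hpair : ∑ j ∈ ({u, w} : Finset (Fin n)), (xm G₂ u j - xm G₁ u j) ^ 2
      = (xm G₂ u u - xm G₁ u u) ^ 2 + (xm G₂ u w - xm G₁ u w) ^ 2 :=
    Finset.sum_pair huw
  have huu : (xm G₂ u u - xm G₁ u u) ^ 2 = 0 := by
    rw [xm_self, xm_self]; norm_num
  rw [hsplit, hpair, huu]
  linarith [hsum_tail, haK, hterm_w]

end SingleEdge

set_option maxHeartbeats 1000000 in
/-- If two finite simple graphs without isolated vertices on the same `n` vertices differ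
by at most `C` edges, then their symmetric normalized Laplacians satisfy
`‖L̂₁ - L̂₂‖_{S¹} ≤ 2C√2·√(n-1)`. -/
theorem schattenOne_normLap_sub_le {n : ℕ}
    (G₁ G₂ : SimpleGraph (Fin n)) [DecidableRel G₁.Adj] [DecidableRel G₂.Adj]
    (hdeg₁ : ∀ v, 0 < G₁.degree v) (hdeg₂ : ∀ v, 0 < G₂.degree v)
    (C : ℕ) (hedges : (symmDiff G₁.edgeFinset G₂.edgeFinset).card ≤ C)
    (hH : (normLap G₁ - normLap G₂).IsHermitian) :
    ∑ i, |hH.eigenvalues i| ≤ 2 * C * Real.sqrt 2 * Real.sqrt ((n : ℝ) - 1) := by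
  classical
  rcases Nat.eq_zero_or_pos n with hn0 | hn0
  · subst hn0
    simp only [Finset.univ_eq_empty, Finset.sum_empty]
    positivity
  have hn2 : 2 ≤ n := by
    have hv : G₁.degree ⟨0, hn0⟩ < Fintype.card (Fin n) := G₁.degree_lt_card_verts _
    have h0 := hdeg₁ ⟨0, hn0⟩
    rw [Fintype.card_fin] at hv
    omega
  set M : Matrix (Fin n) (Fin n) ℝ := normLap G₁ - normLap G₂ with hM
  have hMe : ∀ i j, M i j = xm G₂ i j - xm G₁ i j := fun i j => normLap_sub_apply G₁ G₂ i j
  have hMsym : ∀ i j, M i j = M j i := by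
    intro i j
    rw [hMe, hMe, xm_symm G₂, xm_symm G₁]
  set F2 : ℝ := ∑ i, ∑ j, (M i j) ^ 2 with hF2
  have hF2nonneg : 0 ≤ F2 :=
    Finset.sum_nonneg fun i _ => Finset.sum_nonneg fun j _ => sq_nonneg _
  have hsum_sq : ∑ i, hH.eigenvalues i ^ 2 = F2 := by
    rw [sum_sq_eig M hH, hF2]
    refine Finset.sum_congr rfl fun i _ => Finset.sum_congr rfl fun j _ => ?_
    rw [← hMsym i j, sq]
  set T : Finset (Fin n) := univ.filter (fun i => hH.eigenvalues i ≠ 0) with hT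
  have hTcard : T.card = M.rank := by
    rw [hH.rank_eq_card_non_zero_eigs, Fintype.card_subtype]
  have hCS : (∑ i, |hH.eigenvalues i|) ^ 2 ≤ (M.rank : ℝ) * F2 := by
    have h1 : ∑ i, |hH.eigenvalues i| = ∑ i ∈ T, |hH.eigenvalues i| := by
      symm
      apply Finset.sum_subset (Finset.filter_subset _ _)
      intro x _ hx
      rw [Finset.mem_filter] at hx
      push_neg at hx
      rw [hx (Finset.mem_univ x), abs_zero]
    have h2 := sq_sum_le_card_mul_sum_sq (s := T) (f := fun i => |hH.eigenvalues i|)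
    have h3 : ∑ i ∈ T, |hH.eigenvalues i| ^ 2 ≤ ∑ i, hH.eigenvalues i ^ 2 := by
      calc ∑ i ∈ T, |hH.eigenvalues i| ^ 2 = ∑ i ∈ T, hH.eigenvalues i ^ 2 := by
            simp [sq_abs]
        _ ≤ ∑ i, hH.eigenvalues i ^ 2 :=
            Finset.sum_le_sum_of_subset_of_nonneg (Finset.filter_subset _ _)
              (fun i _ _ => sq_nonneg _)
    calc (∑ i, |hH.eigenvalues i|) ^ 2 = (∑ i ∈ T, |hH.eigenvalues i|) ^ 2 := by rw [h1]
      _ ≤ (T.card : ℝ) * ∑ i ∈ T, |hH.eigenvalues i| ^ 2 := h2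
      _ ≤ (T.card : ℝ) * ∑ i, hH.eigenvalues i ^ 2 :=
          mul_le_mul_of_nonneg_left h3 (by positivity)
      _ = (M.rank : ℝ) * F2 := by rw [hTcard, hsum_sq]
  have hkey : (M.rank : ℝ) * F2 ≤ 8 * (C:ℝ) ^ 2 * ((n:ℝ) - 1) := by
    have hn1R : (1:ℝ) ≤ (n:ℝ) := by exact_mod_cast hn0
    have hC0 : (0:ℝ) ≤ (C:ℝ) := Nat.cast_nonneg C
    rcases hDc : (symmDiff G₁.edgeFinset G₂.edgeFinset).card with _ | _ | k
    -- case 0 : the symmetric difference is empty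
    · have hDe : symmDiff G₁.edgeFinset G₂.edgeFinset = ∅ := Finset.card_eq_zero.mp hDc
      have htouch : ∀ v : Fin n, v ∉ touched G₁ G₂ := by
        intro v hv
        rw [touched, Finset.mem_filter, hDe] at hv
        obtain ⟨-, e, he, -⟩ := hv
        exact absurd he (Finset.notMem_empty e)
      have hzero : F2 = 0 := by
        rw [hF2]
        apply Finset.sum_eq_zero
        intro i _
        apply Finset.sum_eq_zero
        intro j _
        rw [hMe, not_touched_entry G₁ G₂ i j (htouch i) (htouch j)]
        norm_num
      rw [hzero, mul_zero]
      nlinarith [sq_nonneg (C:ℝ)]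
    -- case 1 : exactly one edge differs
    · obtain ⟨e, he⟩ := Finset.card_eq_one.mp hDc
      revert he
      induction e using Sym2.ind with
      | _ u w =>
        intro he
        have hmem : s(u, w) ∈ symmDiff G₁.edgeFinset G₂.edgeFinset := by
          rw [he]; exact Finset.mem_singleton_self _
        have hne : u ≠ w := by
          intro h
          have hdiag : ¬ (s(u,w)).IsDiag → u ≠ w := by
            rw [Sym2.mk_isDiag_iff]; tauto
          rcases Finset.mem_symmDiff.mp hmem with ⟨h1, -⟩ | ⟨h1, -⟩ <;>
            exact hdiag (SimpleGraph.not_isDiag_of_mem_edgeFinset h1) h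
        have hOnly : ∀ a b : Fin n, s(a,b) ≠ s(u,w) → (G₁.Adj a b ↔ G₂.Adj a b) := by
          intro a b hab
          by_contra hne'
          have habD : s(a,b) ∈ symmDiff G₁.edgeFinset G₂.edgeFinset := by
            rw [Finset.mem_symmDiff]
            simp only [SimpleGraph.mem_edgeFinset, SimpleGraph.mem_edgeSet]
            tauto
          rw [he, Finset.mem_singleton] at habD
          exact hab habD
        have htsub : touched G₁ G₂ ⊆ {u, w} := by
          intro v hv
          rw [touched, Finset.mem_filter] at hv
          obtain ⟨-, e', he', hve⟩ := hv
          rw [he, Finset.mem_singleton] at he'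
          subst he'
          rw [Sym2.mem_iff] at hve
          simp only [Finset.mem_insert, Finset.mem_singleton]
          exact hve
        have hsupp : ∀ i ∉ ({u, w} : Finset (Fin n)), ∀ j ∉ ({u, w} : Finset (Fin n)),
            xm G₂ i j - xm G₁ i j = 0 := by
          intro i hi j hj
          exact not_touched_entry G₁ G₂ i j (fun h => hi (htsub h)) (fun h => hj (htsub h))
        have hrank : M.rank ≤ 4 := by
          have h := rank_le_two_card ({u, w} : Finset (Fin n)) M
            (fun i hi j hj => by rw [hMe]; exact hsupp i hi j hj)
          rwa [Finset.card_pair hne, show 2*2 = 4 from rfl] at h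
        -- row bounds, by cases on the direction of the edge
        have hrows : (∑ j, (xm G₂ u j - xm G₁ u j) ^ 2 ≤ 3/4 ∧
            ∑ j, (xm G₂ w j - xm G₁ w j) ^ 2 ≤ 3/4) ∧ 3 ≤ n := by
          have hflip : ∀ i j : Fin n, (xm G₁ i j - xm G₂ i j) ^ 2
              = (xm G₂ i j - xm G₁ i j) ^ 2 := fun i j => by ring
          rcases Finset.mem_symmDiff.mp hmem with ⟨h1, h2⟩ | ⟨h1, h2⟩
          · have hA : G₁.Adj u w := by
              rwa [SimpleGraph.mem_edgeFinset, SimpleGraph.mem_edgeSet] at h1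
            have hN : ¬ G₂.Adj u w := by
              rwa [SimpleGraph.mem_edgeFinset, SimpleGraph.mem_edgeSet] at h2
            have hOnly' : ∀ a b : Fin n, s(a,b) ≠ s(w,u) → (G₁.Adj a b ↔ G₂.Adj a b) :=
              fun a b hab => hOnly a b (fun h => hab (h.trans Sym2.eq_swap))
            refine ⟨⟨se_row G₁ G₂ hdeg₂ hne hA hN hOnly,
              se_row G₁ G₂ hdeg₂ hne.symm hA.symm (fun h => hN h.symm) hOnly'⟩, ?_⟩
            have hd := se_deg_u G₁ G₂ hne hA hN hOnly
            have hdlt : G₁.degree u < Fintype.card (Fin n) := G₁.degree_lt_card_verts _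
            rw [Fintype.card_fin] at hdlt
            have := hdeg₂ u
            omega
          · have hA : G₂.Adj u w := by
              rwa [SimpleGraph.mem_edgeFinset, SimpleGraph.mem_edgeSet] at h1
            have hN : ¬ G₁.Adj u w := by
              rwa [SimpleGraph.mem_edgeFinset, SimpleGraph.mem_edgeSet] at h2
            have hOnly2 : ∀ a b : Fin n, s(a,b) ≠ s(u,w) → (G₂.Adj a b ↔ G₁.Adj a b) :=
              fun a b hab => (hOnly a b hab).symm
            have hOnly2' : ∀ a b : Fin n, s(a,b) ≠ s(w,u) → (G₂.Adj a b ↔ G₁.Adj a b) :=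
              fun a b hab => hOnly2 a b (fun h => hab (h.trans Sym2.eq_swap))
            have hr1 := se_row G₂ G₁ hdeg₁ hne hA hN hOnly2
            have hr2 := se_row G₂ G₁ hdeg₁ hne.symm hA.symm (fun h => hN h.symm) hOnly2'
            simp only [hflip] at hr1 hr2
            refine ⟨⟨hr1, hr2⟩, ?_⟩
            have hd := se_deg_u G₂ G₁ hne hA hN hOnly2
            have hdlt : G₂.degree u < Fintype.card (Fin n) := G₂.degree_lt_card_verts _
            rw [Fintype.card_fin] at hdlt
            have := hdeg₁ u
            omega
        obtain ⟨⟨hrow_u, hrow_w⟩, hn3⟩ := hrows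
        have hF2le : F2 ≤ 3 := by
          have hdd := double_sum_sq_le (fun i j => xm G₂ i j - xm G₁ i j)
            ({u, w} : Finset (Fin n))
            (fun i j => by rw [xm_symm G₂ i j, xm_symm G₁ i j])
            (fun i hi j hj => by exact hsupp i hi j hj)
          have hpair : ∑ v ∈ ({u, w} : Finset (Fin n)), ∑ j, (xm G₂ v j - xm G₁ v j) ^ 2
              = ∑ j, (xm G₂ u j - xm G₁ u j) ^ 2 + ∑ j, (xm G₂ w j - xm G₁ w j) ^ 2 :=
            Finset.sum_pair hne
          have hF2eq : F2 = ∑ i, ∑ j, (xm G₂ i j - xm G₁ i j) ^ 2 := by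
            rw [hF2]
            exact Finset.sum_congr rfl fun i _ => Finset.sum_congr rfl fun j _ => by rw [hMe]
          rw [hF2eq]
          rw [hpair] at hdd
          linarith
        have hC1 : 1 ≤ C := by omega
        have hC1R : (1:ℝ) ≤ (C:ℝ) := by exact_mod_cast hC1
        have hn3R : (3:ℝ) ≤ (n:ℝ) := by exact_mod_cast hn3
        have hrankR : (M.rank : ℝ) ≤ 4 := by exact_mod_cast hrank
        have h1 : (M.rank : ℝ) * F2 ≤ 4 * 3 :=
          mul_le_mul hrankR hF2le hF2nonneg (by norm_num)
        nlinarith [hC1R, hn3R]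
    -- case ≥ 2
    · have hD2 : 2 ≤ (symmDiff G₁.edgeFinset G₂.edgeFinset).card := by omega
      have hC2 : 2 ≤ C := by omega
      have hC2R : (2:ℝ) ≤ (C:ℝ) := by exact_mod_cast hC2
      set S : Finset (Fin n) := touched G₁ G₂ with hS
      have hsupp : ∀ i ∉ S, ∀ j ∉ S, M i j = 0 := by
        intro i hi j hj
        rw [hMe]
        exact not_touched_entry G₁ G₂ i j hi hj
      have hrank : M.rank ≤ 2 * S.card := rank_le_two_card S M hsupp
      have hrankn : M.rank ≤ n := by
        have := Matrix.rank_le_card_height M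
        rwa [Fintype.card_fin] at this
      have hScard : S.card ≤ 2 * C := by
        have h1 := card_touched_le G₁ G₂
        rw [← hS] at h1
        omega
      have hSn : S.card ≤ n := by
        have := Finset.card_le_univ S
        rwa [Fintype.card_fin] at this
      have hF2le : F2 ≤ 4 * (S.card : ℝ) := by
        have hF2eq : F2 = ∑ i, ∑ j, (xm G₂ i j - xm G₁ i j) ^ 2 := by
          rw [hF2]
          exact Finset.sum_congr rfl fun i _ => Finset.sum_congr rfl fun j _ => by rw [hMe]
        have hdd := double_sum_sq_le (fun i j => xm G₂ i j - xm G₁ i j) S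
          (fun i j => by rw [xm_symm G₂ i j, xm_symm G₁ i j])
          (fun i hi j hj => by rw [← hMe]; exact hsupp i hi j hj)
        have hrowsum : ∑ v ∈ S, ∑ j, (xm G₂ v j - xm G₁ v j) ^ 2 ≤ (S.card : ℝ) * 2 := by
          calc ∑ v ∈ S, ∑ j, (xm G₂ v j - xm G₁ v j) ^ 2
              ≤ ∑ _v ∈ S, (2:ℝ) := Finset.sum_le_sum fun v _ =>
                row_sq_le_two G₁ G₂ hdeg₁ hdeg₂ v
            _ = (S.card : ℝ) * 2 := by rw [Finset.sum_const, nsmul_eq_mul]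
        rw [hF2eq]
        calc ∑ i, ∑ j, (xm G₂ i j - xm G₁ i j) ^ 2
            ≤ 2 * ∑ v ∈ S, ∑ j, (xm G₂ v j - xm G₁ v j) ^ 2 := hdd
          _ ≤ 2 * ((S.card : ℝ) * 2) := by linarith
          _ = 4 * (S.card : ℝ) := by ring
      have hsR : (S.card : ℝ) ≤ 2 * (C:ℝ) := by exact_mod_cast hScard
      have hs0 : (0:ℝ) ≤ (S.card : ℝ) := Nat.cast_nonneg _
      have hrankR : (M.rank : ℝ) ≤ 2 * (S.card : ℝ) := by exact_mod_cast hrank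
      have hranknR : (M.rank : ℝ) ≤ (n : ℝ) := by exact_mod_cast hrankn
      have hsnR : (S.card : ℝ) ≤ (n : ℝ) := by exact_mod_cast hSn
      have hn2R : (2:ℝ) ≤ (n:ℝ) := by exact_mod_cast hn2
      by_cases hn5 : 5 ≤ n
      · have hn5R : (5:ℝ) ≤ (n:ℝ) := by exact_mod_cast hn5
        have h1 : (M.rank : ℝ) * F2 ≤ (2 * (S.card : ℝ)) * (4 * (S.card : ℝ)) :=
          mul_le_mul hrankR hF2le hF2nonneg (by positivity)
        nlinarith [hsR, hs0, hC0, sq_nonneg (C:ℝ), hn5R]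
      · have hn4 : n ≤ 4 := by omega
        have hn4R : (n:ℝ) ≤ 4 := by exact_mod_cast hn4
        have h1 : (M.rank : ℝ) * F2 ≤ (n:ℝ) * (4 * (n:ℝ)) := by
          apply mul_le_mul hranknR _ hF2nonneg (by positivity)
          linarith
        nlinarith [hn2R, hn4R, hC2R, mul_nonneg (sub_nonneg.2 hn2R) (sub_nonneg.2 hn4R)]
  -- conclude
  have hLnonneg : 0 ≤ ∑ i, |hH.eigenvalues i| :=
    Finset.sum_nonneg fun i _ => abs_nonneg _
  have hfin : (∑ i, |hH.eigenvalues i|) ^ 2 ≤ 8 * (C:ℝ) ^ 2 * ((n:ℝ) - 1) :=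
    le_trans hCS hkey
  have h1 : ∑ i, |hH.eigenvalues i| ≤ Real.sqrt (8 * (C:ℝ) ^ 2 * ((n:ℝ) - 1)) := by
    rw [← Real.sqrt_sq hLnonneg]
    exact Real.sqrt_le_sqrt hfin
  have hrw : Real.sqrt (8 * (C:ℝ) ^ 2 * ((n:ℝ) - 1))
      = 2 * (C:ℝ) * Real.sqrt 2 * Real.sqrt ((n:ℝ) - 1) := by
    rw [show (8:ℝ) * (C:ℝ) ^ 2 * ((n:ℝ) - 1) = (2*(C:ℝ))^2 * (2 * ((n:ℝ)-1)) by ring,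
      Real.sqrt_mul (by positivity), Real.sqrt_sq (by positivity),
      Real.sqrt_mul (by norm_num) ((n:ℝ) - 1)]
    ring
  rw [hrw] at h1
  exact h1
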